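/- Let f : ℝ^N → ℝ be differentiable with L-Lipschitz gradient (L > 0), Ψ : ℝ^N → ℝ convex, F = f + Ψ, and σ₁ ∈ (0,1). Suppose x, p ∈ ℝ^N and the quantity Δ = ⟨∇f(x), p⟩ + Ψ(x + p) − Ψ(x) satisfies Δ ≤ − c₂‖p‖²/(1 + η^{S/2}) for constants c₂ > 0, η ∈ [0,1), integer S ≥ 1. Then for every λ ∈ (0, 1] with λ ≤ 2(1 − σ₁)c₂ / (L(1 + η^{S/2})), the Armijo condition F(x + λp) ≤ F(x) + λσ₁Δ holds. Consequently, backtracking from λ = 1 with reduction factor θ ∈ (0,1) terminates in finitely many steps and returns a step size λ ≥ min{1, 2θ(1 − σ₁)c₂/(L(1 + η^{S/2}))}. -/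

import Mathlib

open scoped RealInnerProductSpace

section Descent

variable {E : Type*} [NormedAddCommGroup E] [InnerProductSpace ℝ E] [CompleteSpace E]

/-- Descent lemma: if `f` is differentiable with `L`-Lipschitz gradient, then
`f (x + v) ≤ f x + ⟪∇f x, v⟫ + L/2 * ‖v‖²`. -/
lemma descent_lemma {L : ℝ} (hL : 0 ≤ L) (f : E → ℝ) (hf : Differentiable ℝ f)
    (hlip : LipschitzWith (Real.toNNReal L) (fun z => gradient f z)) (x v : E) :
    f (x + v) ≤ f x + ⟪gradient f x, v⟫ + L / 2 * ‖v‖ ^ 2 := by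
  set g : ℝ → ℝ := fun t => f (x + t • v) with hg
  have hderiv : ∀ t : ℝ, HasDerivAt g (⟪gradient f (x + t • v), v⟫) t := by
    intro t
    have hc : HasDerivAt (fun t : ℝ => x + t • v) v t := by
      simpa using ((hasDerivAt_id t).smul_const v).const_add x
    have hfd := (hf (x + t • v)).hasGradientAt.hasFDerivAt
    have := hfd.comp_hasDerivAt t hc
    simpa [InnerProductSpace.toDual_apply_apply, Function.comp_def, hg] using this
  have hcontgrad : Continuous fun z : E => gradient f z := hlip.continuous
  have hcont : Continuous fun t : ℝ => ⟪gradient f (x + t • v), v⟫ := by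
    exact (hcontgrad.comp (by continuity)).inner continuous_const
  have hint : IntervalIntegrable (fun t : ℝ => ⟪gradient f (x + t • v), v⟫)
      MeasureTheory.volume 0 1 := hcont.intervalIntegrable 0 1
  have hFTC : (∫ t in (0:ℝ)..1, ⟪gradient f (x + t • v), v⟫) = g 1 - g 0 :=
    intervalIntegral.integral_eq_sub_of_hasDerivAt (fun t _ => hderiv t) hint
  have hbound : ∀ t ∈ Set.Icc (0:ℝ) 1,
      ⟪gradient f (x + t • v), v⟫ ≤ ⟪gradient f x, v⟫ + L * t * ‖v‖ ^ 2 := by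
    intro t ht
    have h1 : ⟪gradient f (x + t • v) - gradient f x, v⟫ ≤
        ‖gradient f (x + t • v) - gradient f x‖ * ‖v‖ := real_inner_le_norm _ _
    have h2 : ‖gradient f (x + t • v) - gradient f x‖ ≤ L * (t * ‖v‖) := by
      have := hlip.dist_le_mul (x + t • v) x
      rw [Real.coe_toNNReal _ hL] at this
      simpa [dist_eq_norm, norm_smul, abs_of_nonneg ht.1, mul_assoc] using this
    have h3 : ⟪gradient f (x + t • v) - gradient f x, v⟫ ≤ L * t * ‖v‖ ^ 2 := by
      calc ⟪gradient f (x + t • v) - gradient f x, v⟫ ≤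
          ‖gradient f (x + t • v) - gradient f x‖ * ‖v‖ := h1
        _ ≤ L * (t * ‖v‖) * ‖v‖ := by
            apply mul_le_mul_of_nonneg_right h2 (norm_nonneg v)
        _ = L * t * ‖v‖ ^ 2 := by ring
    have := inner_sub_left (𝕜 := ℝ) (gradient f (x + t • v)) (gradient f x) v
    linarith [h3, this.symm.le, this.le]
  have hint2 : IntervalIntegrable (fun t : ℝ => ⟪gradient f x, v⟫ + L * t * ‖v‖ ^ 2)
      MeasureTheory.volume 0 1 := by
    apply Continuous.intervalIntegrable; continuity
  have hmono : (∫ t in (0:ℝ)..1, ⟪gradient f (x + t • v), v⟫) ≤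
      ∫ t in (0:ℝ)..1, (⟪gradient f x, v⟫ + L * t * ‖v‖ ^ 2) :=
    intervalIntegral.integral_mono_on zero_le_one hint hint2 hbound
  have hval : (∫ t in (0:ℝ)..1, (⟪gradient f x, v⟫ + L * t * ‖v‖ ^ 2))
      = ⟪gradient f x, v⟫ + L / 2 * ‖v‖ ^ 2 := by
    have h1 : (∫ t in (0:ℝ)..1, (⟪gradient f x, v⟫ + L * t * ‖v‖ ^ 2))
        = (∫ _ in (0:ℝ)..1, ⟪gradient f x, v⟫) + ∫ t in (0:ℝ)..1, L * t * ‖v‖ ^ 2 := by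
      apply intervalIntegral.integral_add
      · exact intervalIntegrable_const
      · apply Continuous.intervalIntegrable; continuity
    have h2 : (∫ t in (0:ℝ)..1, L * t * ‖v‖ ^ 2) = L / 2 * ‖v‖ ^ 2 := by
      have : (fun t : ℝ => L * t * ‖v‖ ^ 2) = fun t : ℝ => (L * ‖v‖ ^ 2) * t := by
        funext t; ring
      rw [this, intervalIntegral.integral_const_mul, integral_id]
      ring
    rw [h1, h2, intervalIntegral.integral_const]
    simp
  have hg1 : g 1 = f (x + v) := by simp [hg]
  have hg0 : g 0 = f x := by simp [hg]
  nlinarith [hFTC, hmono, hval, hg1, hg0]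

end Descent

/-- step-size lower bound of Lemma 2 of the paper: if
`Δ ≤ −c₂‖p‖²/(1 + η^{S/2})`, then (a) every `λ ∈ (0,1]` with
`λ ≤ 2(1 − σ₁)c₂/(L(1 + η^{S/2}))` satisfies the Armijo condition
`F(x + λp) ≤ F(x) + λσ₁Δ`; (b) some step of the form `θ^i` is accepted; and (c) the
first accepted step `θ^i` (all earlier steps rejected) satisfies
`θ^i ≥ min{1, 2θ(1 − σ₁)c₂/(L(1 + η^{S/2}))}`. -/
theorem armijo_backtracking_bound {N : ℕ} (L σ₁ c₂ η θ : ℝ) (S : ℕ)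
    (hL : 0 < L) (hσ₁ : 0 < σ₁) (hσ₁' : σ₁ < 1) (hc₂ : 0 < c₂)
    (hη0 : 0 ≤ η) (hη1 : η < 1) (hS : 1 ≤ S) (hθ0 : 0 < θ) (hθ1 : θ < 1)
    (f : EuclideanSpace ℝ (Fin N) → ℝ) (hf : Differentiable ℝ f)
    (hlip : LipschitzWith (Real.toNNReal L) (fun z => gradient f z))
    (Ψ : EuclideanSpace ℝ (Fin N) → ℝ) (hΨ : ConvexOn ℝ Set.univ Ψ)
    (F : EuclideanSpace ℝ (Fin N) → ℝ) (hF : ∀ z, F z = f z + Ψ z)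
    (x p : EuclideanSpace ℝ (Fin N)) (Δ : ℝ)
    (hΔdef : Δ = ⟪gradient f x, p⟫ + Ψ (x + p) - Ψ x)
    (hΔ : Δ ≤ -(c₂ * ‖p‖ ^ 2) / (1 + Real.sqrt (η ^ S))) :
    (∀ lam : ℝ, 0 < lam → lam ≤ 1 →
        lam ≤ 2 * (1 - σ₁) * c₂ / (L * (1 + Real.sqrt (η ^ S))) →
        F (x + lam • p) ≤ F x + lam * σ₁ * Δ) ∧
    (∃ i : ℕ, F (x + θ ^ i • p) ≤ F x + θ ^ i * σ₁ * Δ) ∧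
    (∀ i : ℕ, (∀ j < i, ¬ F (x + θ ^ j • p) ≤ F x + θ ^ j * σ₁ * Δ) →
        F (x + θ ^ i • p) ≤ F x + θ ^ i * σ₁ * Δ →
        θ ^ i ≥ min 1 (2 * θ * (1 - σ₁) * c₂ / (L * (1 + Real.sqrt (η ^ S))))) := by
  set s := Real.sqrt (η ^ S) with hs
  have hs0 : 0 ≤ s := Real.sqrt_nonneg _
  have hs1 : 0 < 1 + s := by linarith
  have hB : 0 < 2 * (1 - σ₁) * c₂ / (L * (1 + s)) := by
    apply div_pos (by nlinarith) (by positivity)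
  have key : ∀ lam : ℝ, 0 < lam → lam ≤ 1 →
      lam ≤ 2 * (1 - σ₁) * c₂ / (L * (1 + s)) →
      F (x + lam • p) ≤ F x + lam * σ₁ * Δ := by
    intro lam h0 h1 hb
    have hdesc := descent_lemma hL.le f hf hlip x (lam • p)
    have hinner : ⟪gradient f x, lam • p⟫ = lam * ⟪gradient f x, p⟫ :=
      real_inner_smul_right _ _ _
    have hnorm : ‖lam • p‖ ^ 2 = lam ^ 2 * ‖p‖ ^ 2 := by
      rw [norm_smul]; simp [abs_of_pos h0]; ring
    have hconv : Ψ (x + lam • p) ≤ (1 - lam) * Ψ x + lam * Ψ (x + p) := by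
      have := hΨ.2 (Set.mem_univ x) (Set.mem_univ (x + p))
        (by linarith : (0:ℝ) ≤ 1 - lam) h0.le (by ring)
      have heq : (1 - lam) • x + lam • (x + p) = x + lam • p := by module
      rw [heq, smul_eq_mul, smul_eq_mul] at this
      exact this
    -- from hb : lam * (L * (1+s)) ≤ 2*(1-σ₁)*c₂
    have hb' : lam * (L * (1 + s)) ≤ 2 * (1 - σ₁) * c₂ := by
      rw [le_div_iff₀ (by positivity)] at hb; linarith
    -- from hΔ : Δ * (1+s) ≤ -(c₂ * ‖p‖^2)
    have hΔ' : Δ * (1 + s) ≤ -(c₂ * ‖p‖ ^ 2) := (le_div_iff₀ hs1).mp hΔ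
    rw [hF, hF]
    have hΔle0 : Δ ≤ 0 := by
      have : -(c₂ * ‖p‖ ^ 2) / (1 + s) ≤ 0 := by
        apply div_nonpos_of_nonpos_of_nonneg (by nlinarith [sq_nonneg ‖p‖]) hs1.le
      linarith
    -- main arithmetic: F(x+λp) ≤ f x + Ψ x + λΔ + L/2 λ² ‖p‖² ≤ F x + λσ₁Δ
    have step1 : f (x + lam • p) + Ψ (x + lam • p) ≤
        f x + Ψ x + lam * Δ + L / 2 * lam ^ 2 * ‖p‖ ^ 2 := by
      rw [hinner, hnorm] at hdesc
      rw [hΔdef]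
      linarith [hdesc, hconv]
    have hA : lam * (1 - σ₁) * (Δ * (1 + s)) ≤ lam * (1 - σ₁) * (-(c₂ * ‖p‖ ^ 2)) :=
      mul_le_mul_of_nonneg_left hΔ' (by nlinarith : (0:ℝ) ≤ lam * (1 - σ₁))
    have hBb : lam * (L * (1 + s)) * (lam * ‖p‖ ^ 2 / 2) ≤
        2 * (1 - σ₁) * c₂ * (lam * ‖p‖ ^ 2 / 2) :=
      mul_le_mul_of_nonneg_right hb' (by positivity)
    have step2 : lam * Δ + L / 2 * lam ^ 2 * ‖p‖ ^ 2 ≤ lam * σ₁ * Δ := by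
      have hmul : (lam * Δ + L / 2 * lam ^ 2 * ‖p‖ ^ 2) * (1 + s) ≤
          (lam * σ₁ * Δ) * (1 + s) := by linarith [hA, hBb]
      exact le_of_mul_le_mul_right hmul hs1
    linarith
  refine ⟨key, ?_, ?_⟩
  · obtain ⟨i, hi⟩ := exists_pow_lt_of_lt_one hB hθ1
    exact ⟨i, key _ (pow_pos hθ0 i) (pow_le_one₀ hθ0.le hθ1.le) hi.le⟩
  · intro i hrej hacc
    rcases i with _ | k
    · simp only [pow_zero]
      exact le_trans (min_le_left 1 _) le_rfl
    · have hk : ¬ F (x + θ ^ k • p) ≤ F x + θ ^ k * σ₁ * Δ :=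
        hrej k (Nat.lt_succ_self k)
      have : ¬ θ ^ k ≤ 2 * (1 - σ₁) * c₂ / (L * (1 + s)) := fun h =>
        hk (key _ (pow_pos hθ0 k) (pow_le_one₀ hθ0.le hθ1.le) h)
      have hgt : 2 * (1 - σ₁) * c₂ / (L * (1 + s)) < θ ^ k := not_le.mp this
      have : 2 * θ * (1 - σ₁) * c₂ / (L * (1 + s)) ≤ θ ^ (k + 1) := by
        have := mul_le_mul_of_nonneg_left hgt.le hθ0.le
        calc 2 * θ * (1 - σ₁) * c₂ / (L * (1 + s))
            = θ * (2 * (1 - σ₁) * c₂ / (L * (1 + s))) := by ring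
          _ ≤ θ * θ ^ k := this
          _ = θ ^ (k + 1) := by ring
      exact le_trans (min_le_right _ _) this
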